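/- If G is connected, then for every initial vector z0 : Fin n → ℝ the generation iteration converges: for each vertex i, (M^t z0) i tends, as t → ∞, to v i * (∑ j, z0 j), where v i = (1 + d i) / (∑ j, (1 + d j)). -/

import Mathlib

open Filter Topology

theorem stmt4 (n : ℕ) (hn : 1 ≤ n) (G : SimpleGraph (Fin n)) [DecidableRel G.Adj]
    (M : Matrix (Fin n) (Fin n) ℝ)
    (hM : ∀ i j, M i j =
      if i = j ∨ G.Adj i j then 1 / (1 + (G.degree j : ℝ)) else 0)
    (hG : G.Connected)
    (v : Fin n → ℝ)
    (hv : ∀ i, v i = (1 + (G.degree i : ℝ)) / (∑ j, (1 + (G.degree j : ℝ)))) :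
    ∀ (z0 : Fin n → ℝ) (i : Fin n),
      Tendsto (fun t => ((M ^ t).mulVec z0) i) atTop (𝓝 (v i * ∑ j, z0 j)) := by
  have hdpos : ∀ j : Fin n, (0:ℝ) < 1 + (G.degree j : ℝ) := by
    intro j; positivity
  -- closed neighborhood cardinalities
  have hcard : ∀ j : Fin n,
      (Finset.univ.filter (fun i => i = j ∨ G.Adj i j)).card = 1 + G.degree j := by
    intro j
    have hfilter : Finset.univ.filter (fun i => i = j ∨ G.Adj i j)
        = insert j (G.neighborFinset j) := by
      ext i
      simp [SimpleGraph.adj_comm, or_comm]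
    rw [hfilter, Finset.card_insert_of_notMem (by simp),
      SimpleGraph.card_neighborFinset_eq_degree]
    omega
  have hcardrow : ∀ i : Fin n,
      (Finset.univ.filter (fun j => i = j ∨ G.Adj i j)).card = 1 + G.degree i := by
    intro i
    have hfilter : Finset.univ.filter (fun j => i = j ∨ G.Adj i j)
        = insert i (G.neighborFinset i) := by
      ext j; simp [eq_comm, or_comm]
    rw [hfilter, Finset.card_insert_of_notMem (by simp),
      SimpleGraph.card_neighborFinset_eq_degree]
    omega
  have hMnn : ∀ i j, 0 ≤ M i j := by
    intro i j; rw [hM]; split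
    · positivity
    · exact le_refl 0
  set S : ℝ := ∑ j, (1 + (G.degree j : ℝ)) with hS
  have hSpos : 0 < S := Finset.sum_pos (fun j _ => hdpos j) ⟨⟨0, hn⟩, Finset.mem_univ _⟩
  have hcol : ∀ j, ∑ i, M i j = 1 := by
    intro j
    have : ∑ i, M i j = ∑ i ∈ Finset.univ.filter (fun i => i = j ∨ G.Adj i j),
        (1 / (1 + (G.degree j : ℝ))) := by
      rw [Finset.sum_filter]
      exact Finset.sum_congr rfl fun i _ => hM i j
    rw [this, Finset.sum_const, hcard j, nsmul_eq_mul]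
    push_cast
    field_simp
  have hMv : M.mulVec v = v := by
    funext i
    have step : ∀ j, M i j * v j = if i = j ∨ G.Adj i j then 1 / S else 0 := by
      intro j
      rw [hM, hv]
      have h1 : (1 + (G.degree j : ℝ)) ≠ 0 := (hdpos j).ne'
      have h2 : S ≠ 0 := hSpos.ne'
      split
      · field_simp
      · ring
    show ∑ j, M i j * v j = v i
    rw [Finset.sum_congr rfl fun j _ => step j, ← Finset.sum_filter, Finset.sum_const,
      hcardrow i, nsmul_eq_mul, hv]
    push_cast
    ring
  have hsumv : ∑ i, v i = 1 := by
    rw [Finset.sum_congr rfl fun i _ => hv i, ← Finset.sum_div]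
    field_simp
    exact hS.symm
  -- facts about powers of M
  have hMposof : ∀ i j, (i = j ∨ G.Adj i j) → 0 < M i j := by
    intro i j h
    rw [hM, if_pos h]
    positivity
  have hMnnk : ∀ (k : ℕ) i j, 0 ≤ (M ^ k) i j := by
    intro k
    induction k with
    | zero => intro i j; rw [pow_zero, Matrix.one_apply]; split <;> norm_num
    | succ k ih =>
      intro i j
      rw [pow_succ', Matrix.mul_apply]
      exact Finset.sum_nonneg fun l _ => mul_nonneg (hMnn i l) (ih l j)
  have hcolk : ∀ (k : ℕ) j, ∑ i, (M ^ k) i j = 1 := by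
    intro k
    induction k with
    | zero => intro j; simp [Matrix.one_apply]
    | succ k ih =>
      intro j
      rw [Finset.sum_congr rfl fun i (_ : i ∈ Finset.univ) => by
        rw [pow_succ', Matrix.mul_apply]]
      rw [Finset.sum_comm]
      simp_rw [← Finset.sum_mul, hcol]
      simpa using ih j
  have hstep : ∀ (k : ℕ) i j, 0 < (M ^ k) i j → 0 < (M ^ (k + 1)) i j := by
    intro k i j h
    rw [pow_succ', Matrix.mul_apply]
    refine Finset.sum_pos' (fun l _ => mul_nonneg (hMnn i l) (hMnnk k l j))
      ⟨i, Finset.mem_univ i, ?_⟩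
    exact mul_pos (hMposof i i (Or.inl rfl)) h
  have hwalk : ∀ (i j : Fin n) (p : G.Walk i j), 0 < (M ^ p.length) i j := by
    intro i j p
    induction p with
    | nil => simp [Matrix.one_apply]
    | @cons a b c hab q ih =>
      rw [SimpleGraph.Walk.length_cons, pow_succ', Matrix.mul_apply]
      refine Finset.sum_pos' (fun l _ => mul_nonneg (hMnn a l) (hMnnk q.length l c))
        ⟨b, Finset.mem_univ b, mul_pos (hMposof a b (Or.inr hab)) ih⟩
  have hpos : ∀ i j, 0 < (M ^ n) i j := by
    intro i j
    obtain ⟨p⟩ := hG.preconnected i j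
    obtain ⟨q, hq⟩ : ∃ q : G.Walk i j, q.IsPath := ⟨p.toPath, p.toPath.2⟩
    have hlen : q.length ≤ n := by
      have := hq.length_lt
      simpa using this.le
    have key : ∀ m, q.length ≤ m → 0 < (M ^ m) i j := by
      intro m hm
      induction m, hm using Nat.le_induction with
      | base => exact hwalk i j q
      | succ m _ ih => exact hstep m i j ih
    exact key n hlen
  -- the minimal entry of M^n and the contraction factor
  have hne : (Finset.univ : Finset (Fin n × Fin n)).Nonempty :=
    ⟨(⟨0, hn⟩, ⟨0, hn⟩), Finset.mem_univ _⟩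
  set ε : ℝ := Finset.univ.inf' hne (fun p : Fin n × Fin n => (M ^ n) p.1 p.2) with hεdef
  have hε : 0 < ε := by
    rw [hεdef, Finset.lt_inf'_iff]
    exact fun p _ => hpos p.1 p.2
  have hεle : ∀ i j, ε ≤ (M ^ n) i j := fun i j =>
    Finset.inf'_le _ (Finset.mem_univ (i, j))
  have hnε : (n : ℝ) * ε ≤ 1 := by
    have h1 : ∑ i, ε ≤ ∑ i : Fin n, (M ^ n) i ⟨0, hn⟩ :=
      Finset.sum_le_sum fun i _ => hεle i _
    rw [hcolk n ⟨0, hn⟩, Finset.sum_const] at h1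
    simpa [nsmul_eq_mul] using h1
  set c : ℝ := 1 - (n : ℝ) * ε with hcdef
  have hc0 : 0 ≤ c := by rw [hcdef]; linarith
  have hc1 : c < 1 := by
    rw [hcdef]
    have : (0:ℝ) < (n:ℝ) * ε := by
      apply mul_pos _ hε
      exact_mod_cast hn
    linarith
  -- contraction for M^n on zero-sum vectors
  have hcontr : ∀ x : Fin n → ℝ, ∑ j, x j = 0 →
      ∑ i, |((M ^ n).mulVec x) i| ≤ c * ∑ j, |x j| := by
    intro x hx
    have key : ∀ i, |((M ^ n).mulVec x) i| ≤ ∑ j, ((M ^ n) i j - ε) * |x j| := by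
      intro i
      have e1 : ((M ^ n).mulVec x) i = ∑ j, ((M ^ n) i j - ε) * x j := by
        show ∑ j, (M ^ n) i j * x j = _
        simp_rw [sub_mul]
        rw [Finset.sum_sub_distrib, ← Finset.mul_sum, hx, mul_zero, sub_zero]
      rw [e1]
      refine (Finset.abs_sum_le_sum_abs _ _).trans (Finset.sum_le_sum fun j _ => ?_)
      rw [abs_mul, abs_of_nonneg (sub_nonneg.2 (hεle i j))]
    calc ∑ i, |((M ^ n).mulVec x) i| ≤ ∑ i, ∑ j, ((M ^ n) i j - ε) * |x j| :=
          Finset.sum_le_sum fun i _ => key i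
      _ = ∑ j, (∑ i, (M ^ n) i j - (n:ℝ) * ε) * |x j| := by
          rw [Finset.sum_comm]
          refine Finset.sum_congr rfl fun j _ => ?_
          rw [← Finset.sum_mul]
          congr 1
          rw [Finset.sum_sub_distrib, Finset.sum_const]
          simp [nsmul_eq_mul]
      _ = c * ∑ j, |x j| := by
          rw [Finset.mul_sum]
          refine Finset.sum_congr rfl fun j _ => ?_
          rw [hcolk n j, hcdef]
  -- sum preservation
  have hsump : ∀ (k : ℕ) (x : Fin n → ℝ), ∑ i, ((M ^ k).mulVec x) i = ∑ j, x j := by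
    intro k x
    show ∑ i, ∑ j, (M ^ k) i j * x j = _
    rw [Finset.sum_comm]
    refine Finset.sum_congr rfl fun j _ => ?_
    rw [← Finset.sum_mul, hcolk k j, one_mul]
  -- nonexpansion for one step
  have hnonexp : ∀ x : Fin n → ℝ, ∑ i, |(M.mulVec x) i| ≤ ∑ j, |x j| := by
    intro x
    have key : ∀ i, |(M.mulVec x) i| ≤ ∑ j, M i j * |x j| := by
      intro i
      show |∑ j, M i j * x j| ≤ ∑ j, M i j * |x j|
      refine (Finset.abs_sum_le_sum_abs _ _).trans (Finset.sum_le_sum fun j _ => ?_)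
      rw [abs_mul, abs_of_nonneg (hMnn i j)]
    calc ∑ i, |(M.mulVec x) i| ≤ ∑ i, ∑ j, M i j * |x j| :=
          Finset.sum_le_sum fun i _ => key i
      _ = ∑ j, |x j| := by
          rw [Finset.sum_comm]
          refine Finset.sum_congr rfl fun j _ => ?_
          rw [← Finset.sum_mul, hcol j, one_mul]
  have hnonexpk : ∀ (k : ℕ) (x : Fin n → ℝ), ∑ i, |((M ^ k).mulVec x) i| ≤ ∑ j, |x j| := by
    intro k
    induction k with
    | zero => intro x; simp [Matrix.mulVec_one]
    | succ k ih =>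
      intro x
      have e : (M ^ (k+1)).mulVec x = M.mulVec ((M ^ k).mulVec x) := by
        rw [Matrix.mulVec_mulVec, ← pow_succ']
      rw [e]
      exact (hnonexp _).trans (ih x)
  -- key geometric bound
  have hkey : ∀ (t : ℕ) (x : Fin n → ℝ), ∑ j, x j = 0 →
      ∑ i, |((M ^ t).mulVec x) i| ≤ c ^ (t / n) * ∑ j, |x j| := by
    intro t
    induction t using Nat.strong_induction_on with
    | _ t ih =>
      intro x hx
      by_cases ht : t < n
      · rw [Nat.div_eq_of_lt ht, pow_zero, one_mul]
        exact hnonexpk t x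
      · have hnt : n ≤ t := le_of_not_gt ht
        have e : (M ^ t).mulVec x = (M ^ n).mulVec ((M ^ (t - n)).mulVec x) := by
          have h : t = n + (t - n) := by omega
          rw [Matrix.mulVec_mulVec, ← pow_add, ← h]
        have hy : ∑ j, ((M ^ (t - n)).mulVec x) j = 0 := by rw [hsump, hx]
        have h1 := hcontr _ hy
        have h2 := ih (t - n) (by omega) x hx
        rw [e]
        calc ∑ i, |((M ^ n).mulVec ((M ^ (t - n)).mulVec x)) i|
            ≤ c * ∑ j, |((M ^ (t - n)).mulVec x) j| := h1
          _ ≤ c * (c ^ ((t - n) / n) * ∑ j, |x j|) :=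
              mul_le_mul_of_nonneg_left h2 hc0
          _ = c ^ (t / n) * ∑ j, |x j| := by
              rw [← mul_assoc, ← pow_succ', Nat.div_eq_sub_div hn hnt]
  -- eigenvector of powers
  have hMkv : ∀ k : ℕ, (M ^ k).mulVec v = v := by
    intro k
    induction k with
    | zero => simp
    | succ k ih => rw [pow_succ, ← Matrix.mulVec_mulVec, hMv, ih]
  -- conclusion
  intro z0 i
  set s : ℝ := ∑ j, z0 j with hs
  set w : Fin n → ℝ := z0 - s • v with hw
  have hwsum : ∑ j, w j = 0 := by
    rw [hw]
    simp only [Pi.sub_apply, Pi.smul_apply, smul_eq_mul]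
    rw [Finset.sum_sub_distrib, ← Finset.mul_sum, hsumv, mul_one, hs, sub_self]
  have hz0 : z0 = w + s • v := by rw [hw]; ring_nf
  have hdecomp : ∀ t : ℕ, ((M ^ t).mulVec z0) i - v i * s = ((M ^ t).mulVec w) i := by
    intro t
    rw [hz0, Matrix.mulVec_add, Matrix.mulVec_smul, hMkv]
    simp [mul_comm]
  have hdiv : Tendsto (fun t : ℕ => t / n) atTop atTop := by
    refine tendsto_atTop_atTop.2 fun m => ⟨m * n, fun t htle => ?_⟩
    exact (Nat.le_div_iff_mul_le hn).2 htle
  have hgeo : Tendsto (fun t : ℕ => c ^ (t / n) * ∑ j, |w j|) atTop (𝓝 0) := by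
    have := ((tendsto_pow_atTop_nhds_zero_of_lt_one hc0 hc1).comp hdiv).mul_const (∑ j, |w j|)
    simpa using this
  have habs : ∀ t : ℕ, ‖((M ^ t).mulVec z0) i - v i * s‖ ≤ c ^ (t / n) * ∑ j, |w j| := by
    intro t
    rw [Real.norm_eq_abs, hdecomp t]
    refine le_trans ?_ (hkey t w hwsum)
    exact Finset.single_le_sum (f := fun j => |((M ^ t).mulVec w) j|)
      (fun j _ => abs_nonneg _) (Finset.mem_univ i)
  exact tendsto_sub_nhds_zero_iff.1 (squeeze_zero_norm habs hgeo)
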